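/- Suppose random variables I ∈ [n] and Z_1,...,Z_n ∈ {0,1}^ℓ are jointly distributed such that the marginal distribution of (Z_1,...,Z_n) is uniform on {0,1}^{nℓ}. Then the Shannon entropy of Z_I satisfies H(Z_I) ≥ ℓ - log₂ n. -/

import Mathlib

open Finset

noncomputable section

/-- `p` is a probability mass function on the finite type `Ω`. -/
def IsPMF {Ω : Type*} [Fintype Ω] (p : Ω → ℝ) : Prop :=
  (∀ ω, 0 ≤ p ω) ∧ ∑ ω, p ω = 1

/-- Probability that the random variable `X` equals `x` under `p`. -/
def pr {Ω α : Type*} [Fintype Ω] [DecidableEq α] (p : Ω → ℝ) (X : Ω → α) (x : α) : ℝ :=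
  ∑ ω, if X ω = x then p ω else 0

/-- Shannon entropy (base 2) of a distribution `q` on a finite type. -/
def Hq {α : Type*} [Fintype α] (q : α → ℝ) : ℝ :=
  ∑ x, -(q x * Real.logb 2 (q x))

/-- Shannon entropy (base 2) of the random variable `X` under `p`. -/
def Hent {Ω α : Type*} [Fintype Ω] [Fintype α] [DecidableEq α] (p : Ω → ℝ) (X : Ω → α) : ℝ :=
  Hq (pr p X)

/-- Conditional entropy `H(X|Y) = H(X,Y) - H(Y)`. -/
def condH {Ω α β : Type*} [Fintype Ω] [Fintype α] [Fintype β] [DecidableEq α] [DecidableEq β]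
    (p : Ω → ℝ) (X : Ω → α) (Y : Ω → β) : ℝ :=
  Hent p (fun ω => (X ω, Y ω)) - Hent p Y

/-- Mutual information `I(X;Y)`. -/
def MI {Ω α β : Type*} [Fintype Ω] [Fintype α] [Fintype β] [DecidableEq α] [DecidableEq β]
    (p : Ω → ℝ) (X : Ω → α) (Y : Ω → β) : ℝ :=
  Hent p X + Hent p Y - Hent p (fun ω => (X ω, Y ω))

/-- Conditional mutual information `I(X;Y|Z) = H(X|Z) - H(X|(Y,Z))`. -/
def condMI {Ω α β γ : Type*} [Fintype Ω] [Fintype α] [Fintype β] [Fintype γ]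
    [DecidableEq α] [DecidableEq β] [DecidableEq γ]
    (p : Ω → ℝ) (X : Ω → α) (Y : Ω → β) (Z : Ω → γ) : ℝ :=
  condH p X Z - condH p X (fun ω => (Y ω, Z ω))

/-- Total variation distance between distributions on a finite type. -/
def TV {α : Type*} [Fintype α] (q₁ q₂ : α → ℝ) : ℝ :=
  (∑ x, |q₁ x - q₂ x|) / 2

/-- Binary entropy function (base 2). -/
def binEnt (d : ℝ) : ℝ :=
  -(d * Real.logb 2 d) - ((1 - d) * Real.logb 2 (1 - d))

/-- Min-entropy (base 2) of a distribution on a nonempty finite type. -/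
def Hinf {α : Type*} [Fintype α] [Nonempty α] (q : α → ℝ) : ℝ :=
  -Real.logb 2 (⨆ x, q x)

lemma count_sum {n : ℕ} {F : Type*} [Fintype F] [DecidableEq F] (i : Fin n) (x : F) (c : ℝ) :
    (∑ z : Fin n → F, if z i = x then c else 0) = (Fintype.card F : ℝ)^(n-1) * c := by
  calc (∑ z : Fin n → F, if z i = x then c else 0)
      = ∑ zr : F × ({j : Fin n // j ≠ i} → F), (if zr.1 = x then c else 0) :=
        Equiv.sum_comp (Equiv.funSplitAt i F) (fun zr => if zr.1 = x then c else 0)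
    _ = ∑ a : F, (Fintype.card F : ℝ)^(n-1) * (if a = x then c else 0) := by
        rw [Fintype.sum_prod_type]
        refine Finset.sum_congr rfl fun a _ => ?_
        dsimp only
        show (∑ _y : ({j : Fin n // j ≠ i} → F), if a = x then c else 0) = _
        rw [Finset.sum_const, nsmul_eq_mul]
        congr 1
        rw [Finset.card_univ, Fintype.card_fun]
        push_cast
        congr 1
        simp [Fintype.card_subtype_compl]
    _ = (Fintype.card F : ℝ)^(n-1) * c := by
        rw [← Finset.mul_sum, Finset.sum_ite_eq' Finset.univ x (fun _ => c)]
        simp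

/-- If `I ∈ [n]` and `Z₁,…,Z_n ∈ {0,1}^ℓ` are jointly distributed and the
marginal of `(Z₁,…,Z_n)` is uniform on `{0,1}^{nℓ}`, then `H(Z_I) ≥ ℓ - log₂ n`. -/
theorem stmt_2 {Ω : Type*} [Fintype Ω] (n ℓ : ℕ) (hn : 0 < n) (p : Ω → ℝ) (hp : IsPMF p)
    (I : Ω → Fin n) (Z : Ω → (Fin n → (Fin ℓ → Bool)))
    (hunif : ∀ z, pr p Z z = 1 / 2 ^ (n * ℓ)) :
    Hent p (fun ω => Z ω (I ω)) ≥ (ℓ : ℝ) - Real.logb 2 n := by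
  obtain ⟨hp0, hp1⟩ := hp
  set q : (Fin ℓ → Bool) → ℝ := pr p (fun ω => Z ω (I ω)) with hqdef
  have hq0 : ∀ x, 0 ≤ q x := by
    intro x
    refine Finset.sum_nonneg fun ω _ => ?_
    split
    · exact hp0 ω
    · exact le_rfl
  -- marginal of Z i is uniform
  have hmarg : ∀ (i : Fin n) (x : Fin ℓ → Bool),
      (∑ ω, if Z ω i = x then p ω else 0) = ((2:ℝ)^ℓ)^(n-1) / 2^(n*ℓ) := by
    intro i x
    calc ∑ ω, (if Z ω i = x then p ω else 0)
        = ∑ ω, ∑ z, (if Z ω = z then (if z i = x then p ω else 0) else 0) := by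
          refine Finset.sum_congr rfl fun ω _ => ?_
          rw [Finset.sum_ite_eq]
          simp
      _ = ∑ z, ∑ ω, (if Z ω = z then (if z i = x then p ω else 0) else 0) := Finset.sum_comm
      _ = ∑ z, (if z i = x then pr p Z z else 0) := by
          refine Finset.sum_congr rfl fun z _ => ?_
          by_cases h : z i = x
          · simp [h, pr]
          · simp [h]
      _ = ∑ z : Fin n → Fin ℓ → Bool, (if z i = x then (1/2^(n*ℓ):ℝ) else 0) := by
          refine Finset.sum_congr rfl fun z _ => ?_
          rw [hunif]
      _ = ((2:ℝ)^ℓ)^(n-1) / 2^(n*ℓ) := by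
          rw [count_sum i x]
          have : (Fintype.card (Fin ℓ → Bool) : ℝ) = (2:ℝ)^ℓ := by
            simp [Fintype.card_fun]
          rw [this]
          ring
  -- union bound: q x ≤ n / 2^ℓ
  have hbound : ∀ x, q x ≤ (n : ℝ) / 2^ℓ := by
    intro x
    have h1 : q x ≤ ∑ i : Fin n, ∑ ω, (if Z ω i = x then p ω else 0) := by
      rw [Finset.sum_comm]
      refine Finset.sum_le_sum fun ω _ => ?_
      have : (if Z ω (I ω) = x then p ω else 0)
          ≤ ∑ i : Fin n, (if Z ω i = x then p ω else 0) := by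
        refine Finset.single_le_sum (f := fun i => if Z ω i = x then p ω else 0)
          (fun i _ => ?_) (Finset.mem_univ (I ω))
        split
        · exact hp0 ω
        · exact le_rfl
      exact this
    have h2 : (∑ i : Fin n, ∑ ω, (if Z ω i = x then p ω else 0)) = (n : ℝ) / 2^ℓ := by
      have hpow : ((2:ℝ))^(n*ℓ) = ((2:ℝ)^ℓ)^(n-1) * 2^ℓ := by
        rw [← pow_mul, ← pow_add]
        congr 1
        cases n with
        | zero => omega
        | succ m => simp [Nat.succ_sub_one]; ring
      calc (∑ i : Fin n, ∑ ω, (if Z ω i = x then p ω else 0))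
          = ∑ _i : Fin n, ((2:ℝ)^ℓ)^(n-1) / 2^(n*ℓ) :=
            Finset.sum_congr rfl fun i _ => hmarg i x
        _ = (n : ℝ) * (((2:ℝ)^ℓ)^(n-1) / 2^(n*ℓ)) := by
            rw [Finset.sum_const, Finset.card_univ, Fintype.card_fin, nsmul_eq_mul]
        _ = (n : ℝ) / 2^ℓ := by
            rw [hpow]
            have h2ℓ : ((2:ℝ)^ℓ) ≠ 0 := by positivity
            have h2n : (((2:ℝ)^ℓ)^(n-1)) ≠ 0 := by positivity
            field_simp
    linarith
  -- q sums to 1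
  have hsum1 : ∑ x, q x = 1 := by
    rw [hqdef]
    unfold pr
    rw [Finset.sum_comm]
    calc (∑ ω, ∑ x, if Z ω (I ω) = x then p ω else 0)
        = ∑ ω, p ω := by
          refine Finset.sum_congr rfl fun ω _ => ?_
          rw [Finset.sum_ite_eq]
          simp
      _ = 1 := hp1
  -- entropy lower bound
  have key : Hq q ≥ ∑ x, q x * ((ℓ : ℝ) - Real.logb 2 n) := by
    unfold Hq
    refine Finset.sum_le_sum fun x _ => ?_
    rcases eq_or_lt_of_le (hq0 x) with h0 | h0
    · rw [← h0]
      simp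
    · have hlog : Real.logb 2 (q x) ≤ Real.logb 2 ((n : ℝ) / 2^ℓ) :=
        Real.logb_le_logb_of_le (b := 2) (by norm_num) h0 (hbound x)
      have hlogval : Real.logb 2 ((n : ℝ) / 2^ℓ) = Real.logb 2 n - (ℓ : ℝ) := by
        rw [Real.logb_div (by positivity) (by positivity)]
        rw [Real.logb_pow]
        simp [Real.logb_self_eq_one]
      have : (ℓ : ℝ) - Real.logb 2 n ≤ -Real.logb 2 (q x) := by
        rw [hlogval] at hlog
        linarith
      calc q x * ((ℓ : ℝ) - Real.logb 2 n) ≤ q x * (-Real.logb 2 (q x)) :=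
            mul_le_mul_of_nonneg_left this (le_of_lt h0)
        _ = -(q x * Real.logb 2 (q x)) := by ring
  have hrhs : (∑ x, q x * ((ℓ : ℝ) - Real.logb 2 n)) = (ℓ : ℝ) - Real.logb 2 n := by
    rw [← Finset.sum_mul, hsum1, one_mul]
  show Hq q ≥ (ℓ : ℝ) - Real.logb 2 n
  rw [← hrhs]
  exact key


end
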